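/- Let A be a ring and J a two-sided ideal of A such that the blow-up ring Bl_J(A) is left Noetherian. Let M be an (A,A)-bimodule that is finitely generated as a left A-module, let a_1, …, a_k ∈ A, and set N := {m ∈ M : m·a_i = 0 for all i = 1, …, k}, a left A-submodule of M. Right multiplication by each a_i is left A-linear and preserves each J^nM, hence induces an endomorphism of the J-adic completion M^∧. Then {m ∈ M^∧ : m·a_i = 0 for all i} coincides with the image of the natural (injective) map N^∧ → M^∧. -/

import Mathlib

open scoped Pointwise
open Polynomial

section PowSet

variable {A : Type*} [Ring A]

/-- The `n`-th power of a (two-sided) ideal `J` of a ring `A`, with the convention `J ^ 0 = A`,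
realized as an additive subgroup of `A`. -/
def powSet (J : Ideal A) : ℕ → AddSubgroup A
  | 0 => ⊤
  | 1 => J.toAddSubgroup
  | n + 2 => AddSubgroup.closure ((J : Set A) * (powSet J (n + 1) : Set A))

theorem powSet_succ_succ (J : Ideal A) (n : ℕ) :
    powSet J (n + 2) = AddSubgroup.closure ((J : Set A) * (powSet J (n + 1) : Set A)) := rfl

theorem powSet_mul_mem_left (J : Ideal A) :
    ∀ (n : ℕ) (a : A) {x : A}, x ∈ powSet J n → a * x ∈ powSet J n
  | 0, a, x, _ => AddSubgroup.mem_top _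
  | 1, a, x, hx => J.mul_mem_left a hx
  | n + 2, a, x, hx => by
    induction hx using AddSubgroup.closure_induction with
    | mem z hz =>
      obtain ⟨u, hu, v, hv, rfl⟩ := hz
      exact AddSubgroup.subset_closure
        ⟨a * u, J.mul_mem_left a hu, v, hv, mul_assoc a u v⟩
    | zero => simpa using (powSet J (n + 2)).zero_mem
    | add x y hx hy ihx ihy => simpa [mul_add] using add_mem ihx ihy
    | neg x hx ihx => simpa [mul_neg] using neg_mem ihx

theorem powSet_mul_mem_right (J : Ideal A) (hJ : ∀ x ∈ J, ∀ a : A, x * a ∈ J) :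
    ∀ (n : ℕ) (a : A) {x : A}, x ∈ powSet J n → x * a ∈ powSet J n
  | 0, a, x, _ => AddSubgroup.mem_top _
  | 1, a, x, hx => hJ x hx a
  | n + 2, a, x, hx => by
    induction hx using AddSubgroup.closure_induction with
    | mem z hz =>
      obtain ⟨u, hu, v, hv, rfl⟩ := hz
      exact AddSubgroup.subset_closure
        ⟨u, hu, v * a, powSet_mul_mem_right J hJ (n + 1) a hv, (mul_assoc u v a).symm⟩
    | zero => simpa using (powSet J (n + 2)).zero_mem
    | add x y hx hy ihx ihy => simpa [add_mul] using add_mem ihx ihy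
    | neg x hx ihx => simpa [neg_mul] using neg_mem ihx

theorem powSet_mul_mem (J : Ideal A) (hJ : ∀ x ∈ J, ∀ a : A, x * a ∈ J) :
    ∀ (i j : ℕ) {x y : A}, x ∈ powSet J i → y ∈ powSet J j → x * y ∈ powSet J (i + j)
  | 0, j, x, y, _, hy => by simpa using powSet_mul_mem_left J j x hy
  | 1, 0, x, y, hx, _ => by simpa using powSet_mul_mem_right J hJ 1 y hx
  | 1, j + 1, x, y, hx, hy => by
    rw [show 1 + (j + 1) = j + 2 from by omega, powSet_succ_succ]
    exact AddSubgroup.subset_closure ⟨x, hx, y, hy, rfl⟩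
  | i + 2, j, x, y, hx, hy => by
    rw [show i + 2 + j = (i + j) + 2 from by omega, powSet_succ_succ]
    induction hx using AddSubgroup.closure_induction with
    | mem z hz =>
      obtain ⟨u, hu, v, hv, rfl⟩ := hz
      have hvy : v * y ∈ powSet J (i + 1 + j) := powSet_mul_mem J hJ (i + 1) j hv hy
      rw [show i + 1 + j = i + j + 1 from by omega] at hvy
      exact AddSubgroup.subset_closure ⟨u, hu, v * y, hvy, (mul_assoc u v y).symm⟩
    | zero =>
      simpa using (AddSubgroup.closure ((J : Set A) * (powSet J (i + j + 1) : Set A))).zero_mem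
    | add x₁ x₂ hx₁ hx₂ ih₁ ih₂ => simpa [add_mul] using add_mem ih₁ ih₂
    | neg x₁ hx₁ ih₁ => simpa [neg_mul] using neg_mem ih₁

end PowSet

section BlowUp

variable {A : Type*} [Ring A]

/-- The blow-up ring `Bl_J(A) = ⊕_{i ≥ 0} J^i` of a two-sided ideal `J ⊆ A`, realized as the
subring of the polynomial ring `A[X]` consisting of the polynomials whose `X^i`-coefficient
lies in `J^i` for every `i`. -/
def blowUp (J : Ideal A) (hJ : ∀ x ∈ J, ∀ a : A, x * a ∈ J) : Subring A[X] where
  carrier := {p : A[X] | ∀ i : ℕ, p.coeff i ∈ powSet J i}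
  zero_mem' := fun i => by
    simp only [Polynomial.coeff_zero]; exact (powSet J i).zero_mem
  one_mem' := fun i => by
    rcases i with _ | i
    · exact AddSubgroup.mem_top _
    · simp only [Polynomial.coeff_one, Nat.succ_ne_zero, if_neg (Nat.succ_ne_zero i).symm]
      simpa using (powSet J (i + 1)).zero_mem
  add_mem' := fun {p q} hp hq i => by
    simpa [Polynomial.coeff_add] using add_mem (hp i) (hq i)
  neg_mem' := fun {p} hp i => by
    simpa [Polynomial.coeff_neg] using neg_mem (hp i)
  mul_mem' := fun {p q} hp hq n => by
    rw [Polynomial.coeff_mul]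
    refine AddSubgroup.sum_mem _ fun c hc => ?_
    have h := powSet_mul_mem J hJ c.1 c.2 (hp c.1) (hq c.2)
    rwa [show c.1 + c.2 = n from by simpa using hc] at h

end BlowUp

section Completion

variable {A : Type*} [Ring A]

theorem powSet_succ_le (J : Ideal A) :
    ∀ n : ℕ, powSet J (n + 1) ≤ powSet J n
  | 0 => le_top
  | n + 1 => by
    rw [powSet_succ_succ]
    refine (AddSubgroup.closure_le _).mpr ?_
    rintro z ⟨u, hu, v, hv, rfl⟩
    exact powSet_mul_mem_left J (n + 1) u hv

/-- For a subset `S ⊆ A` and a submodule `N` of an `A`-module `M`, the submodule `S·N` of `M`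
spanned by all products `x • m` with `x ∈ S`, `m ∈ N`. -/
def jsmul (S : Set A) {M : Type*} [AddCommGroup M] [Module A M] (N : Submodule A M) :
    Submodule A M :=
  Submodule.span A {z | ∃ x ∈ S, ∃ m ∈ N, z = x • m}

/-- The submodule `J^n M` of an `A`-module `M`. -/
def jadic (J : Ideal A) (M : Type*) [AddCommGroup M] [Module A M] (n : ℕ) : Submodule A M :=
  jsmul ((powSet J n : AddSubgroup A) : Set A) (⊤ : Submodule A M)

theorem jadic_succ_le (J : Ideal A) (M : Type*) [AddCommGroup M] [Module A M] (n : ℕ) :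
    jadic J M (n + 1) ≤ jadic J M n := by
  refine Submodule.span_mono ?_
  rintro z ⟨x, hx, m, hm, rfl⟩
  exact ⟨x, powSet_succ_le J n hx, m, hm, rfl⟩

/-- The transition map `M/J^{n+1}M → M/J^nM`. -/
def transition (J : Ideal A) (M : Type*) [AddCommGroup M] [Module A M] (n : ℕ) :
    (M ⧸ jadic J M (n + 1)) →ₗ[A] M ⧸ jadic J M n :=
  Submodule.mapQ _ _ LinearMap.id (fun _ hx => jadic_succ_le J M n hx)

/-- The `J`-adic completion `M^∧ = lim_n M/J^nM` of an `A`-module `M`, realized as the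
module of compatible sequences in `∀ n, M/J^nM`. -/
def adicCompletion (J : Ideal A) (M : Type*) [AddCommGroup M] [Module A M] :
    Submodule A (∀ n : ℕ, M ⧸ jadic J M n) where
  carrier := {f | ∀ n : ℕ, transition J M n (f (n + 1)) = f n}
  add_mem' := fun {f g} hf hg n => by
    simp only [Pi.add_apply, map_add, hf n, hg n]
  zero_mem' := fun n => by simp
  smul_mem' := fun a f hf n => by
    simp only [Pi.smul_apply, map_smul, hf n]

theorem jadic_le_comap (J : Ideal A) {M M₂ : Type*} [AddCommGroup M] [Module A M]
    [AddCommGroup M₂] [Module A M₂] (f : M →ₗ[A] M₂) (n : ℕ) :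
    jadic J M n ≤ (jadic J M₂ n).comap f := by
  rw [jadic, jsmul, Submodule.span_le]
  rintro z ⟨x, hx, m, _, rfl⟩
  simp only [SetLike.mem_coe, Submodule.mem_comap, map_smul]
  exact Submodule.subset_span ⟨x, hx, f m, Submodule.mem_top, rfl⟩

/-- The map `M/J^nM → M₂/J^nM₂` induced by a linear map `f : M → M₂`. -/
def inducedQ (J : Ideal A) {M M₂ : Type*} [AddCommGroup M] [Module A M]
    [AddCommGroup M₂] [Module A M₂] (f : M →ₗ[A] M₂) (n : ℕ) :
    (M ⧸ jadic J M n) →ₗ[A] M₂ ⧸ jadic J M₂ n :=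
  Submodule.mapQ _ _ f (jadic_le_comap J f n)

theorem transition_inducedQ (J : Ideal A) {M M₂ : Type*} [AddCommGroup M] [Module A M]
    [AddCommGroup M₂] [Module A M₂] (f : M →ₗ[A] M₂) (n : ℕ)
    (x : M ⧸ jadic J M (n + 1)) :
    transition J M₂ n (inducedQ J f (n + 1) x) = inducedQ J f n (transition J M n x) := by
  obtain ⟨m, rfl⟩ := Submodule.Quotient.mk_surjective _ x
  simp [transition, inducedQ, Submodule.mapQ_apply]

/-- The map `M^∧ → M₂^∧` between `J`-adic completions induced by a linear map `f : M → M₂`;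
this is the natural functorial structure of the `J`-adic completion. -/
def completionMap (J : Ideal A) {M M₂ : Type*} [AddCommGroup M] [Module A M]
    [AddCommGroup M₂] [Module A M₂] (f : M →ₗ[A] M₂) :
    adicCompletion J M →ₗ[A] adicCompletion J M₂ where
  toFun g := ⟨fun n => inducedQ J f n (g.1 n), fun n => by
    rw [transition_inducedQ, g.2 n]⟩
  map_add' g₁ g₂ := Subtype.ext (funext fun n => by
    simp [Submodule.coe_add, Pi.add_apply, map_add])
  map_smul' a g := Subtype.ext (funext fun n => by
    simp [Submodule.coe_smul, Pi.smul_apply, map_smul])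

end Completion

section RightMul

variable {A : Type*} [Ring A]

/-- Right multiplication by `a ∈ A` on an `(A,A)`-bimodule `M`, as a left `A`-linear
endomorphism of `M`. -/
def rmulLin (M : Type*) [AddCommGroup M] [Module A M] [Module Aᵐᵒᵖ M]
    [SMulCommClass A Aᵐᵒᵖ M] (a : A) : M →ₗ[A] M where
  toFun m := MulOpposite.op a • m
  map_add' := smul_add (MulOpposite.op a)
  map_smul' r m := by simpa using (smul_comm r (MulOpposite.op a) m).symm

end RightMul

section Aux

variable {A : Type*} [Ring A]

theorem powSet_antitone (J : Ideal A) {m n : ℕ} (h : m ≤ n) : powSet J n ≤ powSet J m := by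
  induction h with
  | refl => exact le_rfl
  | step _ ih => exact le_trans (powSet_succ_le J _) ih

variable {M : Type*} [AddCommGroup M] [Module A M]

theorem mem_jsmul_of_mem {S : Set A} {W : Submodule A M} {x : A} {m : M}
    (hx : x ∈ S) (hm : m ∈ W) : x • m ∈ jsmul S W :=
  Submodule.subset_span ⟨x, hx, m, hm, rfl⟩

theorem jsmul_mono_left {S T : Set A} (h : S ⊆ T) (W : Submodule A M) :
    jsmul S W ≤ jsmul T W :=
  Submodule.span_mono (by rintro z ⟨x, hx, m, hm, rfl⟩; exact ⟨x, h hx, m, hm, rfl⟩)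

theorem jsmul_powSet_mono (J : Ideal A) {m n : ℕ} (h : m ≤ n) (W : Submodule A M) :
    jsmul ((powSet J n : AddSubgroup A) : Set A) W ≤
      jsmul ((powSet J m : AddSubgroup A) : Set A) W :=
  jsmul_mono_left (powSet_antitone J h) W

theorem jadic_antitone (J : Ideal A) {m n : ℕ} (h : m ≤ n) :
    jadic J M n ≤ jadic J M m :=
  jsmul_powSet_mono J h ⊤

theorem smul_mem_jsmul (J : Ideal A) (hJ : ∀ x ∈ J, ∀ a : A, x * a ∈ J)
    (W : Submodule A M) {i k : ℕ} {x : A} (hx : x ∈ powSet J i)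
    {v : M} (hv : v ∈ jsmul ((powSet J k : AddSubgroup A) : Set A) W) :
    x • v ∈ jsmul ((powSet J (i + k) : AddSubgroup A) : Set A) W := by
  have H : ∀ v, v ∈ jsmul ((powSet J k : AddSubgroup A) : Set A) W →
      ∀ x, x ∈ powSet J i → x • v ∈ jsmul ((powSet J (i + k) : AddSubgroup A) : Set A) W := by
    intro v hv
    induction hv using Submodule.span_induction with
    | mem z hz =>
      obtain ⟨y, hy, m, hm, rfl⟩ := hz
      intro x hx
      rw [smul_smul]
      exact mem_jsmul_of_mem (powSet_mul_mem J hJ i k hx hy) hm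
    | zero => intro x _; simp only [smul_zero]; exact (jsmul _ W).zero_mem
    | add v w _ _ ihv ihw =>
      intro x hx
      simpa [smul_add] using add_mem (ihv x hx) (ihw x hx)
    | smul a v _ ih =>
      intro x hx
      rw [smul_smul]
      exact ih (x * a) (powSet_mul_mem_right J hJ i a hx)
  exact H v hv x hx

theorem smul_mem_jadic (J : Ideal A) (hJ : ∀ x ∈ J, ∀ a : A, x * a ∈ J)
    {i k : ℕ} {x : A} (hx : x ∈ powSet J i) {v : M} (hv : v ∈ jadic J M k) :
    x • v ∈ jadic J M (i + k) :=
  smul_mem_jsmul J hJ ⊤ hx hv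

theorem mem_jadic_zero (J : Ideal A) (m : M) : m ∈ jadic J M 0 := by
  have : (1 : A) • m ∈ jadic J M 0 :=
    mem_jsmul_of_mem (AddSubgroup.mem_top _) Submodule.mem_top
  simpa using this

theorem le_jsmul_powSet_zero (J : Ideal A) (W : Submodule A M) :
    W ≤ jsmul ((powSet J 0 : AddSubgroup A) : Set A) W := by
  intro m hm
  have : (1 : A) • m ∈ jsmul ((powSet J 0 : AddSubgroup A) : Set A) W :=
    mem_jsmul_of_mem (AddSubgroup.mem_top _) hm
  simpa using this

theorem inducedQ_mk {M₂ : Type*} [AddCommGroup M₂] [Module A M₂] (J : Ideal A)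
    (f : M →ₗ[A] M₂) (n : ℕ) (m : M) :
    inducedQ J f n (Submodule.Quotient.mk m) = Submodule.Quotient.mk (f m) := by
  simp [inducedQ, Submodule.mapQ_apply]

theorem transition_mk (J : Ideal A) (n : ℕ) (m : M) :
    transition J M n (Submodule.Quotient.mk m) = Submodule.Quotient.mk m := by
  simp [transition, Submodule.mapQ_apply]

theorem compat_mk (J : Ideal A) {g : ∀ n : ℕ, M ⧸ jadic J M n}
    (hg : g ∈ adicCompletion J M) (k : ℕ) (n : ℕ) (m : M)
    (h : g (n + k) = Submodule.Quotient.mk m) : g n = Submodule.Quotient.mk m := by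
  induction k with
  | zero => exact h
  | succ k ih =>
    apply ih
    have := hg (n + k)
    rw [show n + (k + 1) = (n + k) + 1 from rfl] at h
    rw [h, transition_mk] at this
    exact this.symm

theorem completionMap_apply (J : Ideal A) {M₂ : Type*} [AddCommGroup M₂] [Module A M₂]
    (f : M →ₗ[A] M₂) (g : adicCompletion J M) (n : ℕ) :
    (completionMap J f g).1 n = inducedQ J f n (g.1 n) := rfl

end Aux

section Rees

open TrivSqZeroExt

variable {A : Type*} [Ring A] (J : Ideal A) (hJ : ∀ x ∈ J, ∀ a : A, x * a ∈ J)
variable (M : Type*) [AddCommGroup M] [Module A M] [Module Aᵐᵒᵖ M] [SMulCommClass A Aᵐᵒᵖ M]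

/-- The inclusion of the blow-up ring into polynomials over the trivial square-zero
extension `A ⊕ M`. -/
noncomputable def blHom : (blowUp J hJ) →+* (TrivSqZeroExt A M)[X] :=
  (Polynomial.mapRingHom (TrivSqZeroExt.inlHom A M)).comp (blowUp J hJ).subtype

set_option synthInstance.maxHeartbeats 1000000

/-- The module structure on `(A ⊕ M)[X]` over the blow-up ring. -/
noncomputable local instance blModule : Module (blowUp J hJ) (TrivSqZeroExt A M)[X] :=
  Module.compHom _ (blHom J hJ M)

theorem bl_smul (q : blowUp J hJ) (p : (TrivSqZeroExt A M)[X]) :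
    q • p = Polynomial.map (TrivSqZeroExt.inlHom A M) (q : A[X]) * p := rfl

theorem coeff_bl_smul (q : blowUp J hJ) (p : (TrivSqZeroExt A M)[X]) (n : ℕ) :
    (q • p).coeff n = ∑ x ∈ Finset.HasAntidiagonal.antidiagonal n,
      TrivSqZeroExt.inl ((q : A[X]).coeff x.1) * p.coeff x.2 := by
  rw [bl_smul, Polynomial.coeff_mul]
  simp [Polynomial.coeff_map]

variable {M}

/-- The Rees module `⊕ₙ J^n M` as a module over the blow-up ring, realized inside
`(A ⊕ M)[X]`. -/
noncomputable def reesM : Submodule (blowUp J hJ) (TrivSqZeroExt A M)[X] where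
  carrier := {p | ∀ n : ℕ, (p.coeff n).fst = 0 ∧ (p.coeff n).snd ∈ jadic J M n}
  zero_mem' := fun n => by simp [(jadic J M n).zero_mem]
  add_mem' := fun {p q} hp hq n => by
    refine ⟨?_, ?_⟩
    · simp [(hp n).1, (hq n).1]
    · simpa using add_mem (hp n).2 (hq n).2
  smul_mem' := fun q p hp => by
    intro n
    rw [coeff_bl_smul]
    constructor
    · rw [TrivSqZeroExt.fst_sum]
      refine Finset.sum_eq_zero fun x hx => ?_
      simp [(hp x.2).1]
    · rw [TrivSqZeroExt.snd_sum]
      refine sum_mem fun x hx => ?_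
      have h1 : ((q : A[X]).coeff x.1) ∈ powSet J x.1 := q.2 x.1
      have h2 := (hp x.2).2
      have : (TrivSqZeroExt.inl ((q : A[X]).coeff x.1) * p.coeff x.2 :
          TrivSqZeroExt A M).snd = ((q : A[X]).coeff x.1) • (p.coeff x.2).snd := by
        simp [TrivSqZeroExt.snd_mul]
      rw [this]
      have := smul_mem_jadic J hJ h1 h2
      rwa [Finset.HasAntidiagonal.mem_antidiagonal.mp hx] at this

/-- The Rees submodule of a left submodule `W ⊆ M`: `⊕ₙ (J^n M ∩ W)`. -/
noncomputable def reesN (W : Submodule A M) : Submodule (blowUp J hJ) (TrivSqZeroExt A M)[X] where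
  carrier := {p | ∀ n : ℕ, (p.coeff n).fst = 0 ∧ (p.coeff n).snd ∈ jadic J M n ⊓ W}
  zero_mem' := fun n => by simp [(jadic J M n ⊓ W).zero_mem]
  add_mem' := fun {p q} hp hq n => by
    refine ⟨?_, ?_⟩
    · simp [(hp n).1, (hq n).1]
    · simpa using add_mem (hp n).2 (hq n).2
  smul_mem' := fun q p hp => by
    intro n
    rw [coeff_bl_smul]
    constructor
    · rw [TrivSqZeroExt.fst_sum]
      refine Finset.sum_eq_zero fun x hx => ?_
      simp [(hp x.2).1]
    · rw [TrivSqZeroExt.snd_sum]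
      refine sum_mem fun x hx => ?_
      have h1 : ((q : A[X]).coeff x.1) ∈ powSet J x.1 := q.2 x.1
      have h2 := (hp x.2).2
      have heq : (TrivSqZeroExt.inl ((q : A[X]).coeff x.1) * p.coeff x.2 :
          TrivSqZeroExt A M).snd = ((q : A[X]).coeff x.1) • (p.coeff x.2).snd := by
        simp [TrivSqZeroExt.snd_mul]
      rw [heq]
      refine Submodule.mem_inf.mpr ⟨?_, ?_⟩
      · have := smul_mem_jadic J hJ h1 (Submodule.mem_inf.mp h2).1
        rwa [Finset.HasAntidiagonal.mem_antidiagonal.mp hx] at this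
      · exact W.smul_mem _ (Submodule.mem_inf.mp h2).2

theorem reesN_le_reesM (W : Submodule A M) : reesN J hJ W ≤ reesM J hJ :=
  fun p hp n => ⟨(hp n).1, (Submodule.mem_inf.mp (hp n).2).1⟩

theorem mem_powSet_zero (J : Ideal A) (a : A) : a ∈ powSet J 0 := AddSubgroup.mem_top a

theorem monomial_mem_blowUp (n : ℕ) {x : A} (hx : x ∈ powSet J n) :
    (Polynomial.monomial n x : A[X]) ∈ blowUp J hJ := by
  intro i
  rw [Polynomial.coeff_monomial]
  split
  · next h => exact h ▸ hx
  · exact (powSet J i).zero_mem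

theorem bl_monomial_smul (n : ℕ) {x : A} (hx : x ∈ powSet J n) (m : ℕ) (t : TrivSqZeroExt A M) :
    (⟨Polynomial.monomial n x, monomial_mem_blowUp J hJ n hx⟩ : blowUp J hJ) •
        (Polynomial.monomial m t : (TrivSqZeroExt A M)[X]) =
      Polynomial.monomial (n + m) (TrivSqZeroExt.inl x * t) := by
  rw [bl_smul]
  simp [Polynomial.map_monomial, Polynomial.monomial_mul_monomial]

theorem C_inr_mem_span [Module.Finite A M] {s : Finset M} (hs : Submodule.span A (s : Set M) = ⊤)
    (u : M) :
    (Polynomial.C (TrivSqZeroExt.inr u) : (TrivSqZeroExt A M)[X]) ∈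
      Submodule.span (blowUp J hJ)
        ((fun m => (Polynomial.C (TrivSqZeroExt.inr m) : (TrivSqZeroExt A M)[X])) ''
          (s : Set M)) := by
  have hu : u ∈ Submodule.span A (s : Set M) := hs ▸ Submodule.mem_top
  induction hu using Submodule.span_induction with
  | mem z hz =>
    exact Submodule.subset_span (Set.mem_image_of_mem _ hz)
  | zero => simp only [TrivSqZeroExt.inr_zero, map_zero]; exact zero_mem _
  | add v w _ _ ihv ihw => simpa [TrivSqZeroExt.inr_add, map_add] using add_mem ihv ihw
  | smul a v _ ih =>
    have key : (⟨Polynomial.monomial 0 a, monomial_mem_blowUp J hJ 0 (mem_powSet_zero J a)⟩ :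
          blowUp J hJ) • (Polynomial.C (TrivSqZeroExt.inr v) : (TrivSqZeroExt A M)[X]) =
        Polynomial.C (TrivSqZeroExt.inr (a • v)) := by
      rw [← Polynomial.monomial_zero_left, bl_monomial_smul J hJ 0 (mem_powSet_zero J a),
        TrivSqZeroExt.inl_mul_inr]
      simp [Polynomial.monomial_zero_left]
    exact key ▸ Submodule.smul_mem _ _ ih

theorem monomial_inr_mem_span [Module.Finite A M] {s : Finset M}
    (hs : Submodule.span A (s : Set M) = ⊤) (n : ℕ) {m : M} (hm : m ∈ jadic J M n) :
    (Polynomial.monomial n (TrivSqZeroExt.inr m) : (TrivSqZeroExt A M)[X]) ∈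
      Submodule.span (blowUp J hJ)
        ((fun m => (Polynomial.C (TrivSqZeroExt.inr m) : (TrivSqZeroExt A M)[X])) ''
          (s : Set M)) := by
  induction hm using Submodule.span_induction with
  | mem z hz =>
    obtain ⟨x, hx, u, _, rfl⟩ := hz
    have key : (⟨Polynomial.monomial n x, monomial_mem_blowUp J hJ n hx⟩ : blowUp J hJ) •
          (Polynomial.C (TrivSqZeroExt.inr u) : (TrivSqZeroExt A M)[X]) =
        Polynomial.monomial n (TrivSqZeroExt.inr (x • u)) := by
      rw [← Polynomial.monomial_zero_left, bl_monomial_smul J hJ n hx, TrivSqZeroExt.inl_mul_inr,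
        Nat.add_zero]
    exact key ▸ Submodule.smul_mem _ _ (C_inr_mem_span J hJ hs u)
  | zero => simp only [TrivSqZeroExt.inr_zero, map_zero]; exact zero_mem _
  | add v w _ _ ihv ihw => simpa [TrivSqZeroExt.inr_add, map_add] using add_mem ihv ihw
  | smul a v _ ih =>
    have key : (⟨Polynomial.monomial 0 a, monomial_mem_blowUp J hJ 0 (mem_powSet_zero J a)⟩ :
          blowUp J hJ) • (Polynomial.monomial n (TrivSqZeroExt.inr v) : (TrivSqZeroExt A M)[X]) =
        Polynomial.monomial n (TrivSqZeroExt.inr (a • v)) := by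
      rw [bl_monomial_smul J hJ 0 (mem_powSet_zero J a), TrivSqZeroExt.inl_mul_inr]
      simp
    exact key ▸ Submodule.smul_mem _ _ ih

theorem reesM_fg [Module.Finite A M] : (reesM J hJ (M := M)).FG := by
  obtain ⟨s, hs⟩ := Module.Finite.fg_top (R := A) (M := M)
  rw [Submodule.fg_def]
  refine ⟨(fun m => (Polynomial.C (TrivSqZeroExt.inr m) : (TrivSqZeroExt A M)[X])) ''
    (s : Set M), (s.finite_toSet).image _, ?_⟩
  apply le_antisymm
  · rw [Submodule.span_le]
    rintro p hp
    simp only [Set.mem_image] at hp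
    obtain ⟨m, _, rfl⟩ := hp
    intro n
    rcases n with _ | n
    · exact ⟨by simp, by simpa using mem_jadic_zero J m⟩
    · refine ⟨?_, ?_⟩ <;> simp [Polynomial.coeff_C, (jadic J M (n + 1)).zero_mem]
  · intro p hp
    rw [p.as_sum_support]
    refine sum_mem fun n hn => ?_
    have h1 := (hp n).1
    have h2 := (hp n).2
    have : p.coeff n = TrivSqZeroExt.inr (p.coeff n).snd := by
      ext
      · simp [h1]
      · simp
    rw [this]
    exact monomial_inr_mem_span J hJ hs n h2

theorem reesN_fg [Module.Finite A M] (hbl : IsNoetherianRing (blowUp J hJ))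
    (W : Submodule A M) : (reesN J hJ W).FG := by
  haveI := isNoetherian_of_fg_of_noetherian (reesM J hJ (M := M)) (reesM_fg J hJ)
  have h2 : (Submodule.comap (reesM J hJ (M := M)).subtype (reesN J hJ W)).FG :=
    IsNoetherian.noetherian _
  have h3 := h2.map (reesM J hJ (M := M)).subtype
  rwa [Submodule.map_comap_subtype, inf_eq_right.mpr (reesN_le_reesM J hJ W)] at h3

/-- **The Artin–Rees lemma** for a two-sided ideal with left Noetherian blow-up ring. -/
theorem artin_rees [Module.Finite A M] (hbl : IsNoetherianRing (blowUp J hJ))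
    (W : Submodule A M) :
    ∃ c : ℕ, ∀ n : ℕ,
      jadic J M (n + c) ⊓ W ≤ jsmul ((powSet J n : AddSubgroup A) : Set A) W := by
  obtain ⟨S, hS⟩ := reesN_fg J hJ hbl W
  set c := S.sup Polynomial.natDegree with hc
  refine ⟨c, fun n => ?_⟩
  have key : ∀ p ∈ reesN J hJ W, ∀ j : ℕ,
      (p.coeff j).snd ∈ jsmul ((powSet J (j - c) : AddSubgroup A) : Set A) W := by
    intro p hp
    rw [← hS] at hp
    induction hp using Submodule.span_induction with
    | mem p hpS =>
      intro j
      rcases le_or_gt j c with h | h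
      · have hpN : p ∈ reesN J hJ W := hS ▸ Submodule.subset_span hpS
        have hj : j - c = 0 := by omega
        rw [hj]
        exact le_jsmul_powSet_zero J W (Submodule.mem_inf.mp (hpN j).2).2
      · have hdeg : p.natDegree < j :=
          lt_of_le_of_lt (Finset.le_sup (Finset.mem_coe.mp hpS)) h
        rw [Polynomial.coeff_eq_zero_of_natDegree_lt hdeg]
        simpa using zero_mem _
    | zero => intro j; simpa using zero_mem _
    | add p q _ _ ihp ihq => intro j; simpa using add_mem (ihp j) (ihq j)
    | smul q p _ ih =>
      intro j
      rw [coeff_bl_smul, TrivSqZeroExt.snd_sum]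
      refine sum_mem fun x hx => ?_
      have h1 : ((q : A[X]).coeff x.1) ∈ powSet J x.1 := q.2 x.1
      have heq : (TrivSqZeroExt.inl ((q : A[X]).coeff x.1) * p.coeff x.2 :
          TrivSqZeroExt A M).snd = ((q : A[X]).coeff x.1) • (p.coeff x.2).snd := by
        simp [TrivSqZeroExt.snd_mul]
      rw [heq]
      have h2 := smul_mem_jsmul J hJ W h1 (ih x.2)
      refine jsmul_powSet_mono J ?_ W h2
      have := Finset.HasAntidiagonal.mem_antidiagonal.mp hx
      omega
  intro m hm
  obtain ⟨hm1, hm2⟩ := Submodule.mem_inf.mp hm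
  have hmem : (Polynomial.monomial (n + c) (TrivSqZeroExt.inr m) :
      (TrivSqZeroExt A M)[X]) ∈ reesN J hJ W := by
    intro j
    rw [Polynomial.coeff_monomial]
    split
    · next h =>
      refine ⟨by simp, ?_⟩
      simp only [TrivSqZeroExt.snd_inr]
      exact h ▸ Submodule.mem_inf.mpr ⟨hm1, hm2⟩
    · exact ⟨by simp, by simpa using zero_mem _⟩
  have hkey := key _ hmem (n + c)
  rw [Polynomial.coeff_monomial, if_pos rfl] at hkey
  simpa [TrivSqZeroExt.snd_inr, Nat.add_sub_cancel] using hkey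

end Rees

section Main

variable {A : Type*} [Ring A]

theorem pi_mem_jadic (J : Ideal A) {M : Type*} [AddCommGroup M] [Module A M]
    {k : ℕ} (n : ℕ) {f : Fin k → M} (hf : ∀ i, f i ∈ jadic J M n) :
    f ∈ jadic J (Fin k → M) n := by
  have hrw : f = ∑ i : Fin k, Pi.single i (f i) := (Finset.univ_sum_single f).symm
  rw [hrw]
  refine sum_mem fun i _ => ?_
  have h := Submodule.mem_comap.mp
    (jadic_le_comap J (LinearMap.single A (fun _ : Fin k => M) i) n (hf i))
  simpa using h

theorem jsmul_range_le (J : Ideal A) {M M₂ : Type*} [AddCommGroup M] [Module A M]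
    [AddCommGroup M₂] [Module A M₂] (φ : M →ₗ[A] M₂) (n : ℕ) :
    jsmul ((powSet J n : AddSubgroup A) : Set A) (LinearMap.range φ) ≤
      Submodule.map φ (jadic J M n) := by
  rw [jsmul, Submodule.span_le]
  rintro z ⟨x, hx, w, hw, rfl⟩
  obtain ⟨m, rfl⟩ := hw
  exact Submodule.mem_map.mpr
    ⟨x • m, mem_jsmul_of_mem hx Submodule.mem_top, map_smul φ x m⟩

theorem exists_approx (J : Ideal A) (hJ : ∀ x ∈ J, ∀ a : A, x * a ∈ J)
    (hbl : IsNoetherianRing (blowUp J hJ))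
    {M : Type*} [AddCommGroup M] [Module A M] [Module Aᵐᵒᵖ M] [SMulCommClass A Aᵐᵒᵖ M]
    [Module.Finite A M] {k : ℕ} (a : Fin k → A) :
    ∃ c : ℕ, ∀ n : ℕ, ∀ m : M, (∀ i, rmulLin M (a i) m ∈ jadic J M (n + c)) →
      ∃ u ∈ ⨅ i : Fin k, LinearMap.ker (rmulLin M (a i)), m - u ∈ jadic J M n := by
  set φ : M →ₗ[A] (Fin k → M) := LinearMap.pi fun i => rmulLin M (a i) with hφ
  obtain ⟨c, hc⟩ := artin_rees J hJ hbl (LinearMap.range φ)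
  refine ⟨c, fun n m hm => ?_⟩
  have h1 : φ m ∈ jadic J (Fin k → M) (n + c) := pi_mem_jadic J (n + c) fun i => hm i
  have h2 : φ m ∈ jadic J (Fin k → M) (n + c) ⊓ LinearMap.range φ :=
    Submodule.mem_inf.mpr ⟨h1, LinearMap.mem_range_self φ m⟩
  obtain ⟨m', hm', hφm'⟩ := Submodule.mem_map.mp (jsmul_range_le J φ n (hc n h2))
  refine ⟨m - m', ?_, by simpa using hm'⟩
  rw [Submodule.mem_iInf]
  intro i
  rw [LinearMap.mem_ker]
  have h3 : φ (m - m') = 0 := by rw [map_sub, hφm', sub_self]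
  have h4 := congrFun (congrArg (fun z => (z : Fin k → M)) h3) i
  simpa [hφ, LinearMap.pi_apply] using h4

end Main

set_option maxHeartbeats 1000000 in
/-- Let `A` be a ring and `J` a two-sided ideal of `A` such that the blow-up
ring `Bl_J(A)` is left Noetherian. Let `M` be an `(A,A)`-bimodule that is finitely generated as
a left `A`-module, let `a₁, …, a_k ∈ A`, and let `N := {m ∈ M : m·aᵢ = 0 for all i}` — a left
`A`-submodule of `M`. Then the annihilator `{m ∈ M^∧ : m·aᵢ = 0 for all i}` of the `aᵢ` in the
`J`-adic completion `M^∧` coincides with the image of the natural (injective) map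
`N^∧ → M^∧`. -/
theorem annihilator_completion {A : Type*} [Ring A] (J : Ideal A)
    (hJtwoSided : ∀ x ∈ J, ∀ a : A, x * a ∈ J)
    (hbl : IsNoetherianRing (blowUp J hJtwoSided))
    (M : Type*) [AddCommGroup M] [Module A M] [Module Aᵐᵒᵖ M]
    [SMulCommClass A Aᵐᵒᵖ M] [Module.Finite A M]
    (k : ℕ) (a : Fin k → A) :
    Function.Injective
      (completionMap J (Submodule.subtype (⨅ i : Fin k, LinearMap.ker (rmulLin M (a i))))) ∧
    Set.range
      (completionMap J (Submodule.subtype (⨅ i : Fin k, LinearMap.ker (rmulLin M (a i))))) =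
      {x : adicCompletion J M | ∀ i : Fin k, completionMap J (rmulLin M (a i)) x = 0} := by
  classical
  set N := ⨅ i : Fin k, LinearMap.ker (rmulLin M (a i)) with hN
  obtain ⟨c₂, hc₂⟩ := artin_rees J hJtwoSided hbl N
  obtain ⟨c, hc⟩ := exists_approx J hJtwoSided hbl (M := M) a
  have hNmap : ∀ n : ℕ, jsmul ((powSet J n : AddSubgroup A) : Set A) N ≤
      Submodule.map N.subtype (jadic J (↥N) n) := by
    intro n
    rw [jsmul, Submodule.span_le]
    rintro z ⟨x, hx, m, hm, rfl⟩
    exact Submodule.mem_map.mpr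
      ⟨x • ⟨m, hm⟩, mem_jsmul_of_mem hx Submodule.mem_top, rfl⟩
  -- injectivity
  have hinj : ∀ g : adicCompletion J (↥N), completionMap J N.subtype g = 0 → g = 0 := by
    intro g hg0
    choose v hv using fun n => Submodule.Quotient.mk_surjective (jadic J (↥N) n) (g.1 n)
    have hvz : ∀ n, (v n : M) ∈ jadic J M n := by
      intro n
      have h0 : (completionMap J N.subtype g).1 n = (0 : adicCompletion J M).1 n :=
        congrArg (fun z => z.1 n) hg0
      rw [completionMap_apply, ← hv n, inducedQ_mk] at h0
      exact (Submodule.Quotient.mk_eq_zero _).mp h0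
    apply Subtype.ext; funext n
    have hvmem : v (n + c₂) ∈ jadic J (↥N) n := by
      have hx : (v (n + c₂) : M) ∈ jadic J M (n + c₂) ⊓ N :=
        Submodule.mem_inf.mpr ⟨hvz (n + c₂), (v (n + c₂)).2⟩
      obtain ⟨w, hw, hweq⟩ := Submodule.mem_map.mp (hNmap n (hc₂ n hx))
      have hwe : w = v (n + c₂) := Subtype.ext hweq
      rwa [hwe] at hw
    have hcm := compat_mk J g.2 c₂ n (v (n + c₂)) (hv (n + c₂)).symm
    show g.1 n = (0 : adicCompletion J (↥N)).1 n
    rw [hcm]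
    show Submodule.Quotient.mk (v (n + c₂)) = (0 : (↥N) ⧸ jadic J (↥N) n)
    rwa [Submodule.Quotient.mk_eq_zero]
  refine ⟨?_, ?_⟩
  · intro g₁ g₂ h
    have h0 : completionMap J N.subtype (g₁ - g₂) = 0 := by
      rw [map_sub, h, sub_self]
    exact sub_eq_zero.mp (hinj _ h0)
  · ext x
    constructor
    · rintro ⟨g, rfl⟩ i
      apply Subtype.ext; funext n
      choose v hv using fun n =>
        Submodule.Quotient.mk_surjective (jadic J (↥N) n) (g.1 n)
      show (completionMap J (rmulLin M (a i)) (completionMap J N.subtype g)).1 n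
          = (0 : adicCompletion J M).1 n
      rw [completionMap_apply, completionMap_apply, ← hv n, inducedQ_mk, inducedQ_mk]
      have hz : rmulLin M (a i) ((v n : M)) = 0 := by
        have h1 : (v n : M) ∈ ⨅ i : Fin k, LinearMap.ker (rmulLin M (a i)) := (v n).2
        exact LinearMap.mem_ker.mp (Submodule.mem_iInf _ |>.mp h1 i)
      show Submodule.Quotient.mk (rmulLin M (a i) ((v n : M))) = _
      rw [hz]
      exact (Submodule.Quotient.mk_eq_zero _).mpr ((jadic J M n).zero_mem)
    · intro hx
      choose m hm using fun n =>
        Submodule.Quotient.mk_surjective (jadic J M n) (x.1 n)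
      have hstep : ∀ n, m (n + 1) - m n ∈ jadic J M n := by
        intro n
        have h1 : x.1 n = Submodule.Quotient.mk (m (n + 1)) :=
          compat_mk J x.2 1 n (m (n + 1)) (hm (n + 1)).symm
        rw [← hm n] at h1
        have h2 := (Submodule.Quotient.eq _).mp h1
        simpa [neg_sub] using neg_mem h2
      have htel : ∀ n t : ℕ, m (n + t) - m n ∈ jadic J M n := by
        intro n t
        induction t with
        | zero => simpa using (jadic J M n).zero_mem
        | succ t ih =>
          have h2 : m (n + t + 1) - m (n + t) ∈ jadic J M n :=
            jadic_antitone J (Nat.le_add_right n t) (hstep (n + t))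
          have h3 := add_mem h2 ih
          rw [sub_add_sub_cancel] at h3
          exact h3
      have hann : ∀ n (i : Fin k), rmulLin M (a i) (m n) ∈ jadic J M n := by
        intro n i
        have h0 : (completionMap J (rmulLin M (a i)) x).1 n = (0 : adicCompletion J M).1 n :=
          congrArg (fun z => z.1 n) (hx i)
        rw [completionMap_apply, ← hm n, inducedQ_mk] at h0
        exact (Submodule.Quotient.mk_eq_zero _).mp h0
      choose u hu1 hu2 using fun n => hc n (m (n + c)) (fun i => hann (n + c) i)
      have hud : ∀ n, u (n + 1) - u n ∈ jadic J M n ⊓ N := by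
        intro n
        refine Submodule.mem_inf.mpr ⟨?_, sub_mem (hu1 (n + 1)) (hu1 n)⟩
        have h1 : -(m (n + 1 + c) - u (n + 1)) ∈ jadic J M n :=
          neg_mem (jadic_antitone J (Nat.le_succ n) (hu2 (n + 1)))
        have h2 : m (n + 1 + c) - m (n + c) ∈ jadic J M n := by
          have := jadic_antitone J (Nat.le_add_right n c) (hstep (n + c))
          rwa [show n + c + 1 = n + 1 + c by omega] at this
        have h3 := hu2 n
        have h4 := add_mem (add_mem h1 h2) h3
        have e : -(m (n + 1 + c) - u (n + 1)) + (m (n + 1 + c) - m (n + c)) +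
            (m (n + c) - u n) = u (n + 1) - u n := by abel
        rwa [e] at h4
      have hgc : ∀ n, (⟨u (n + 1 + c₂), hu1 _⟩ : ↥N) - ⟨u (n + c₂), hu1 _⟩ ∈
          jadic J (↥N) n := by
        intro n
        have hd : u (n + c₂ + 1) - u (n + c₂) ∈ jadic J M (n + c₂) ⊓ N := hud (n + c₂)
        obtain ⟨w, hw, hweq⟩ := Submodule.mem_map.mp (hNmap n (hc₂ n hd))
        have hwe : w = (⟨u (n + 1 + c₂), hu1 _⟩ : ↥N) - ⟨u (n + c₂), hu1 _⟩ := by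
          apply Subtype.ext
          rw [show n + 1 + c₂ = n + c₂ + 1 by omega]
          simpa using hweq
        rwa [hwe] at hw
      refine ⟨⟨fun n => Submodule.Quotient.mk (⟨u (n + c₂), hu1 _⟩ : ↥N), ?_⟩, ?_⟩
      · intro n
        show transition J (↥N) n (Submodule.Quotient.mk _) = _
        rw [transition_mk]
        rw [Submodule.Quotient.eq]
        exact hgc n
      · apply Subtype.ext; funext n
        show inducedQ J N.subtype n (Submodule.Quotient.mk _) = x.1 n
        rw [inducedQ_mk, ← hm n, Submodule.Quotient.eq]
        have h1 : -(m (n + c₂ + c) - u (n + c₂)) ∈ jadic J M n :=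
          neg_mem (jadic_antitone J (Nat.le_add_right n c₂) (hu2 (n + c₂)))
        have h2 : m (n + c₂ + c) - m n ∈ jadic J M n := by
          have := htel n (c₂ + c)
          rwa [show n + (c₂ + c) = n + c₂ + c by omega] at this
        have h3 := add_mem h1 h2
        have e : -(m (n + c₂ + c) - u (n + c₂)) + (m (n + c₂ + c) - m n) =
            (⟨u (n + c₂), hu1 _⟩ : ↥N).1 - m n := by
          show _ = u (n + c₂) - m n
          abel
        rwa [e] at h3
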